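/- Let f : [t₀, t] → ℝ and Ψ : [t₀, t] → ℝ integrable. Suppose (i) for all s₀ ≤ s₁ in [t₀,t] we have f(s₁) - f(s₀) ≤ ∫_{s₀}^{s₁} Ψ, and (ii) f(s₁) - f(s₀) = ∫_{s₀}^{s₁} Ψ whenever [s₀, s₁] is contained in an open set G of full measure in [t₀,t] on which f is continuous. Let Φ : ℝ → ℝ be non-decreasing, M-Lipschitz, and absolutely continuous. If additionally Φ(f(s₁)) - Φ(f(s₀)) = ∫_{s₀}^{s₁} Φ'(f(τ))Ψ(τ) dτ for [s₀,s₁] ⊆ G, and there is an integrable h ≥ 0 with ∫_{s₀}^{s₁} Ψ ≤ ∫_{s₀}^{s₁} h for all s₀ ≤ s₁, then Φ(f(t)) - Φ(f(t₀)) ≤ ∫_{t₀}^{t} Φ'(f(τ))Ψ(τ) dτ. -/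

import Mathlib

open MeasureTheory

theorem stmt_4 (t₀ t M : ℝ) (ht : t₀ < t)
    (f Ψ h : ℝ → ℝ) (G : Set ℝ)
    (hGopen : IsOpen G) (hGsub : G ⊆ Set.Icc t₀ t)
    (hGfull : volume (Set.Icc t₀ t \ G) = 0)
    (hΨint : IntegrableOn Ψ (Set.Icc t₀ t))
    (hhint : IntegrableOn h (Set.Icc t₀ t))
    (hhpos : ∀ᵐ τ ∂(volume.restrict (Set.Icc t₀ t)), 0 ≤ h τ)
    (hineq : ∀ s₀ s₁ : ℝ, t₀ ≤ s₀ → s₀ ≤ s₁ → s₁ ≤ t →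
      f s₁ - f s₀ ≤ ∫ τ in s₀..s₁, Ψ τ)
    (hfcont : ContinuousOn f G)
    (heq : ∀ s₀ s₁ : ℝ, s₀ ≤ s₁ → Set.Icc s₀ s₁ ⊆ G →
      f s₁ - f s₀ = ∫ τ in s₀..s₁, Ψ τ)
    (Φ Φ' : ℝ → ℝ) (hM : 0 ≤ M)
    (hmono : Monotone Φ)
    (hlip : ∀ x y : ℝ, |Φ x - Φ y| ≤ M * |x - y|)
    (hac : ∀ x y : ℝ, x ≤ y → Φ y - Φ x = ∫ s in x..y, Φ' s)
    (hΦeq : ∀ s₀ s₁ : ℝ, s₀ ≤ s₁ → Set.Icc s₀ s₁ ⊆ G →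
      Φ (f s₁) - Φ (f s₀) = ∫ τ in s₀..s₁, Φ' (f τ) * Ψ τ)
    (hprodint : IntegrableOn (fun τ => Φ' (f τ) * Ψ τ) (Set.Icc t₀ t))
    (hdom : ∀ s₀ s₁ : ℝ, t₀ ≤ s₀ → s₀ ≤ s₁ → s₁ ≤ t →
      (∫ τ in s₀..s₁, Ψ τ) ≤ ∫ τ in s₀..s₁, h τ) :
    Φ (f t) - Φ (f t₀) ≤ ∫ τ in t₀..t, Φ' (f τ) * Ψ τ := by
  classical
  set g : ℝ → ℝ := fun τ => Φ' (f τ) * Ψ τ with hg_def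
  set ρ : ℝ → ℝ := fun τ => M * h τ + |g τ| with hρ_def
  have hρint : IntegrableOn ρ (Set.Icc t₀ t) := (hhint.const_mul M).add hprodint.abs
  have hρnn : ∀ᵐ τ ∂(volume.restrict (Set.Icc t₀ t)), 0 ≤ ρ τ :=
    hhpos.mono fun τ hτ => add_nonneg (mul_nonneg hM hτ) (abs_nonneg _)
  -- increment bound on arbitrary subintervals
  have hineqA : ∀ s₀ s₁ : ℝ, t₀ ≤ s₀ → s₀ ≤ s₁ → s₁ ≤ t →
      Φ (f s₁) - Φ (f s₀) ≤ M * ∫ τ in Set.Ioc s₀ s₁, h τ := by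
    intro s₀ s₁ h0 h01 h1
    have hsub : Set.Ioc s₀ s₁ ⊆ Set.Icc t₀ t := fun x hx => ⟨h0.trans hx.1.le, hx.2.trans h1⟩
    have hhnn : 0 ≤ ∫ τ in Set.Ioc s₀ s₁, h τ :=
      setIntegral_nonneg_of_ae_restrict (ae_restrict_of_ae_restrict_of_subset hsub hhpos)
    rcases le_or_gt (f s₁) (f s₀) with hc | hc
    · exact le_trans (sub_nonpos.2 (hmono hc)) (mul_nonneg hM hhnn)
    · calc Φ (f s₁) - Φ (f s₀) ≤ |Φ (f s₁) - Φ (f s₀)| := le_abs_self _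
        _ ≤ M * |f s₁ - f s₀| := hlip _ _
        _ = M * (f s₁ - f s₀) := by rw [abs_of_pos (sub_pos.2 hc)]
        _ ≤ M * ∫ τ in s₀..s₁, Ψ τ :=
            mul_le_mul_of_nonneg_left (hineq _ _ h0 h01 h1) hM
        _ ≤ M * ∫ τ in s₀..s₁, h τ :=
            mul_le_mul_of_nonneg_left (hdom _ _ h0 h01 h1) hM
        _ = M * ∫ τ in Set.Ioc s₀ s₁, h τ := by rw [intervalIntegral.integral_of_le h01]
  -- main lemma for each open cover V of the bad set
  have main : ∀ V : Set ℝ, IsOpen V → (Set.Icc t₀ t \ G) ⊆ V →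
      Φ (f t) - Φ (f t₀) ≤ (∫ τ in Set.Ioc t₀ t, g τ) + ∫ τ in Set.Ioc t₀ t ∩ V, ρ τ := by
    intro V hVopen hKV
    set P : ℝ → ℝ := fun s => ∫ τ in Set.Ioc t₀ s, g τ with hP_def
    set Hh : ℝ → ℝ := fun s => ∫ τ in Set.Ioc t₀ s, h τ with hH_def
    set ψ : ℝ → ℝ := fun s => ∫ τ in Set.Ioc t₀ s ∩ V, ρ τ with hψ_def
    have hgsub : ∀ {s₀ s₁ : ℝ}, t₀ ≤ s₀ → s₁ ≤ t → Set.Ioc s₀ s₁ ⊆ Set.Icc t₀ t :=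
      fun {s₀ s₁} h0 h1 x hx => ⟨h0.trans hx.1.le, hx.2.trans h1⟩
    have Padd : ∀ s₀ s₁ : ℝ, t₀ ≤ s₀ → s₀ ≤ s₁ → s₁ ≤ t →
        P s₁ = P s₀ + ∫ τ in Set.Ioc s₀ s₁, g τ := by
      intro s₀ s₁ h0 h01 h1
      rw [hP_def]
      simp only
      rw [← Set.Ioc_union_Ioc_eq_Ioc h0 h01]
      exact setIntegral_union (Set.Ioc_disjoint_Ioc_of_le le_rfl) measurableSet_Ioc
        (hprodint.mono_set (hgsub le_rfl (h01.trans h1)))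
        (hprodint.mono_set (hgsub h0 h1))
    have Hadd : ∀ s₀ s₁ : ℝ, t₀ ≤ s₀ → s₀ ≤ s₁ → s₁ ≤ t →
        Hh s₁ = Hh s₀ + ∫ τ in Set.Ioc s₀ s₁, h τ := by
      intro s₀ s₁ h0 h01 h1
      rw [hH_def]
      simp only
      rw [← Set.Ioc_union_Ioc_eq_Ioc h0 h01]
      exact setIntegral_union (Set.Ioc_disjoint_Ioc_of_le le_rfl) measurableSet_Ioc
        (hhint.mono_set (hgsub le_rfl (h01.trans h1)))
        (hhint.mono_set (hgsub h0 h1))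
    have ψadd : ∀ s₀ s₁ : ℝ, t₀ ≤ s₀ → s₀ ≤ s₁ → s₁ ≤ t →
        ψ s₁ = ψ s₀ + ∫ τ in Set.Ioc s₀ s₁ ∩ V, ρ τ := by
      intro s₀ s₁ h0 h01 h1
      rw [hψ_def]
      simp only
      rw [← Set.Ioc_union_Ioc_eq_Ioc h0 h01, Set.union_inter_distrib_right]
      exact setIntegral_union
        ((Set.Ioc_disjoint_Ioc_of_le le_rfl).mono Set.inter_subset_left Set.inter_subset_left)
        (measurableSet_Ioc.inter hVopen.measurableSet)
        (hρint.mono_set (Set.inter_subset_left.trans (hgsub le_rfl (h01.trans h1))))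
        (hρint.mono_set (Set.inter_subset_left.trans (hgsub h0 h1)))
    have ψmono : ∀ s₀ s₁ : ℝ, t₀ ≤ s₀ → s₀ ≤ s₁ → s₁ ≤ t → ψ s₀ ≤ ψ s₁ := by
      intro s₀ s₁ h0 h01 h1
      rw [ψadd s₀ s₁ h0 h01 h1]
      have : 0 ≤ ∫ τ in Set.Ioc s₀ s₁ ∩ V, ρ τ :=
        setIntegral_nonneg_of_ae_restrict (ae_restrict_of_ae_restrict_of_subset
          (Set.inter_subset_left.trans (hgsub h0 h1)) hρnn)
      linarith
    set S : Set ℝ := {s | s ∈ Set.Icc t₀ t ∧ Φ (f s) - Φ (f t₀) ≤ P s + ψ s} with hS_def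
    have ht₀S : t₀ ∈ S := by
      refine ⟨⟨le_rfl, ht.le⟩, ?_⟩
      have hP0 : P t₀ = 0 := by simp [hP_def]
      have hψ0 : ψ t₀ = 0 := by simp [hψ_def]
      rw [hP0, hψ0]; simp
    have hSne : S.Nonempty := ⟨t₀, ht₀S⟩
    have hSbdd : BddAbove S := ⟨t, fun s hs => hs.1.2⟩
    set c := sSup S with hc_def
    have hc₀ : t₀ ≤ c := le_csSup hSbdd ht₀S
    have hct : c ≤ t := csSup_le hSne fun s hs => hs.1.2
    -- c ∈ S
    have hcS : c ∈ S := by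
      refine ⟨⟨hc₀, hct⟩, ?_⟩
      refine le_of_forall_pos_le_add ?_
      intro ε hε
      have hPcont : ContinuousOn P (Set.Icc t₀ t) :=
        intervalIntegral.continuousOn_primitive hprodint
      have hHcont : ContinuousOn Hh (Set.Icc t₀ t) :=
        intervalIntegral.continuousOn_primitive hhint
      have hcmem : c ∈ Set.Icc t₀ t := ⟨hc₀, hct⟩
      have hq : ContinuousWithinAt (fun s => P s + M * (Hh c - Hh s)) (Set.Icc t₀ t) c :=
        (hPcont.continuousWithinAt hcmem).add
          (((continuousWithinAt_const.sub (hHcont.continuousWithinAt hcmem)).const_mul M))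
      have hqc : P c + M * (Hh c - Hh c) < P c + ε := by simp [hε]
      have hev : ∀ᶠ s in nhdsWithin c (Set.Icc t₀ t),
          P s + M * (Hh c - Hh s) < P c + ε := hq.eventually_lt_const hqc
      rw [Filter.eventually_iff, Metric.mem_nhdsWithin_iff] at hev
      obtain ⟨δ, hδ, hball⟩ := hev
      obtain ⟨s₂, hs₂S, hs₂gt⟩ : ∃ s₂ ∈ S, c - δ < s₂ := by
        rcases lt_or_ge (c - δ) t₀ with hlt | hle
        · exact ⟨t₀, ht₀S, hlt⟩
        · exact exists_lt_of_lt_csSup hSne (by linarith)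
      have hs₂le : s₂ ≤ c := le_csSup hSbdd hs₂S
      have hs₂mem : s₂ ∈ Set.Icc t₀ t := hs₂S.1
      have hs₂ball : s₂ ∈ Metric.ball c δ := by
        rw [Metric.mem_ball, Real.dist_eq, abs_of_nonpos (by linarith)]
        linarith
      have hkey : P s₂ + M * (Hh c - Hh s₂) < P c + ε := hball ⟨hs₂ball, hs₂mem⟩
      have hinc : Φ (f c) - Φ (f s₂) ≤ M * (Hh c - Hh s₂) := by
        have := hineqA s₂ c hs₂mem.1 hs₂le hct
        have hH := Hadd s₂ c hs₂mem.1 hs₂le hct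
        rw [hH]; linarith [this]
      have hψle : ψ s₂ ≤ ψ c := ψmono s₂ c hs₂mem.1 hs₂le hct
      have hs₂ineq := hs₂S.2
      linarith
    -- c = t
    have hceqt : c = t := by
      by_contra hne
      have hclt : c < t := lt_of_le_of_ne hct hne
      have hprog : ∃ d, c < d ∧ d ∈ S := by
        by_cases hcG : c ∈ G
        · obtain ⟨r, hr, hball⟩ := Metric.isOpen_iff.1 hGopen c hcG
          set d := min (c + r / 2) t with hd_def
          have hcd : c < d := lt_min (by linarith) hclt
          have hdt : d ≤ t := min_le_right _ _
          have hIccG : Set.Icc c d ⊆ G := by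
            intro x hx
            apply hball
            rw [Metric.mem_ball, Real.dist_eq, abs_of_nonneg (by linarith [hx.1])]
            have : x ≤ c + r / 2 := hx.2.trans (min_le_left _ _)
            linarith
          have hΦd := hΦeq c d hcd.le hIccG
          rw [intervalIntegral.integral_of_le hcd.le] at hΦd
          refine ⟨d, hcd, ⟨hc₀.trans hcd.le, hdt⟩, ?_⟩
          have hP := Padd c d hc₀ hcd.le hdt
          have hψ := ψmono c d hc₀ hcd.le hdt
          have hcineq := hcS.2
          rw [hP]
          have : Φ (f d) - Φ (f c) = ∫ τ in Set.Ioc c d, g τ := hΦd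
          linarith
        · have hcV : c ∈ V := hKV ⟨⟨hc₀, hct⟩, hcG⟩
          obtain ⟨r, hr, hball⟩ := Metric.isOpen_iff.1 hVopen c hcV
          set d := min (c + r / 2) t with hd_def
          have hcd : c < d := lt_min (by linarith) hclt
          have hdt : d ≤ t := min_le_right _ _
          have hIccV : Set.Icc c d ⊆ V := by
            intro x hx
            apply hball
            rw [Metric.mem_ball, Real.dist_eq, abs_of_nonneg (by linarith [hx.1])]
            have : x ≤ c + r / 2 := hx.2.trans (min_le_left _ _)
            linarith
          refine ⟨d, hcd, ⟨hc₀.trans hcd.le, hdt⟩, ?_⟩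
          have hP := Padd c d hc₀ hcd.le hdt
          have hψ := ψadd c d hc₀ hcd.le hdt
          have hcineq := hcS.2
          have hIocV : Set.Ioc c d ∩ V = Set.Ioc c d :=
            Set.inter_eq_self_of_subset_left (Set.Ioc_subset_Icc_self.trans hIccV)
          have hinc : Φ (f d) - Φ (f c) ≤ M * ∫ τ in Set.Ioc c d, h τ :=
            hineqA c d hc₀ hcd.le hdt
          have hρsplit : (∫ τ in Set.Ioc c d, ρ τ) =
              M * (∫ τ in Set.Ioc c d, h τ) + ∫ τ in Set.Ioc c d, |g τ| := by
            rw [hρ_def]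
            rw [integral_add ((hhint.mono_set (hgsub hc₀ hdt)).const_mul M)
              (hprodint.mono_set (hgsub hc₀ hdt)).abs]
            rw [MeasureTheory.integral_const_mul]
          have habs : -(∫ τ in Set.Ioc c d, g τ) ≤ ∫ τ in Set.Ioc c d, |g τ| := by
            have h1 : |∫ τ in Set.Ioc c d, g τ| ≤ ∫ τ in Set.Ioc c d, |g τ| := by
              simpa [Real.norm_eq_abs] using
                norm_integral_le_integral_norm (μ := volume.restrict (Set.Ioc c d)) g
            linarith [neg_abs_le (∫ τ in Set.Ioc c d, g τ)]
          rw [hP, hψ, hIocV]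
          linarith
      obtain ⟨d, hcd, hdS⟩ := hprog
      exact absurd (le_csSup hSbdd hdS) (not_le.2 hcd)
    have := hcS.2
    rw [hceqt] at this
    exact this
  -- now choose shrinking open covers
  rw [intervalIntegral.integral_of_le ht.le]
  have hVn : ∀ n : ℕ, ∃ V : Set ℝ, IsOpen V ∧ (Set.Icc t₀ t \ G) ⊆ V ∧
      volume V < (((n : ENNReal)) + 1)⁻¹ := by
    intro n
    obtain ⟨U, hU1, hU2, hU3⟩ := Set.exists_isOpen_lt_of_lt (μ := volume)
      (Set.Icc t₀ t \ G) (((n : ENNReal)) + 1)⁻¹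
      (by rw [hGfull]; exact ENNReal.inv_pos.2 (by simp)  )
    exact ⟨U, hU2, hU1, hU3⟩
  choose V hVopen hVK hVsmall using hVn
  set s : ℕ → Set ℝ := fun n => Set.Ioc t₀ t ∩ V n with hs_def
  have hsub : ∀ n, s n ⊆ Set.Icc t₀ t := fun n => Set.inter_subset_left.trans Set.Ioc_subset_Icc_self
  have htend : Filter.Tendsto (fun n => ∫ τ in s n, ρ τ) Filter.atTop (nhds 0) := by
    have hInt : Integrable ρ (volume.restrict (Set.Icc t₀ t)) := hρint
    have hμtend : Filter.Tendsto
        ((volume.restrict (Set.Icc t₀ t)) ∘ s) Filter.atTop (nhds 0) := by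
      have hub : Filter.Tendsto (fun n : ℕ => (((n : ENNReal)) + 1)⁻¹) Filter.atTop (nhds 0) := by
        have : Filter.Tendsto (fun n : ℕ => ((n + 1 : ℕ) : ENNReal)⁻¹) Filter.atTop (nhds 0) :=
          ENNReal.tendsto_inv_nat_nhds_zero.comp (Filter.tendsto_add_atTop_nat 1)
        simpa [Nat.cast_add] using this
      refine tendsto_of_tendsto_of_tendsto_of_le_of_le tendsto_const_nhds hub
        (fun n => zero_le) (fun n => ?_)
      calc (volume.restrict (Set.Icc t₀ t)) (s n) ≤ volume (s n) :=
              Measure.restrict_le_self _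
          _ ≤ volume (V n) := measure_mono Set.inter_subset_right
          _ ≤ _ := (hVsmall n).le
    have := hInt.tendsto_setIntegral_nhds_zero hμtend
    have heqn : ∀ n, (∫ τ in s n, ρ τ ∂(volume.restrict (Set.Icc t₀ t))) = ∫ τ in s n, ρ τ := by
      intro n
      rw [Measure.restrict_restrict ((measurableSet_Ioc.inter (hVopen n).measurableSet)),
        Set.inter_eq_self_of_subset_left (hsub n)]
    simpa only [heqn] using this
  have hle : ∀ n, Φ (f t) - Φ (f t₀) ≤ (∫ τ in Set.Ioc t₀ t, g τ) + ∫ τ in s n, ρ τ :=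
    fun n => main (V n) (hVopen n) (hVK n)
  have hlim : Filter.Tendsto (fun n => (∫ τ in Set.Ioc t₀ t, g τ) + ∫ τ in s n, ρ τ)
      Filter.atTop (nhds ((∫ τ in Set.Ioc t₀ t, g τ) + 0)) :=
    tendsto_const_nhds.add htend
  rw [add_zero] at hlim
  exact ge_of_tendsto' hlim hle
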